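/- Let X be a random variable distributed as the CIR process value V_t at time t > 0, started from x > 0, with parameters κ, θ, σ > 0 satisfying 2κθ/σ² > η for a real η. Then E[X^{-η}] = (κ/σ²)^η (sinh(κt/2))^{-2κθ/σ²} exp((κ/σ²)(κθ t + x - x·coth(κt/2))) · (1 + coth(κt/2))^{η - 2κθ/σ²} · (Γ(2κθ/σ² - η)/Γ(2κθ/σ²)) · ₁F₁(2κθ/σ² - η, 2κθ/σ², 2κx/(σ²(e^{κt}-1))), where ₁F₁ is the Kummer confluent hypergeometric function. -/

import Mathlib

open MeasureTheory Set

/-- Kummer's confluent hypergeometric function ₁F₁(a, b, z). -/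
noncomputable def oneF1 (a b z : ℝ) : ℝ :=
  ∑' n : ℕ, ((ascPochhammer ℝ n).eval a / (ascPochhammer ℝ n).eval b) * z ^ n / n.factorial

/-- Modified Bessel function of the first kind I_q(x) (for x > 0). -/
noncomputable def besselI (q x : ℝ) : ℝ :=
  ∑' n : ℕ, (x / 2) ^ (2 * n) * (x / 2) ^ q / (n.factorial * Real.Gamma (n + q + 1))

/-- Transition density of the CIR process at time t started from x:
    a scaled noncentral chi-squared density. -/
noncomputable def cirDensity (κ θ σ x t y : ℝ) : ℝ :=
  let c := 2 * κ / (σ ^ 2 * (1 - Real.exp (-κ * t)))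
  let u := c * x * Real.exp (-κ * t)
  let v := c * y
  let q := 2 * κ * θ / σ ^ 2 - 1
  c * Real.exp (-(u + v)) * (v / u) ^ (q / 2) * besselI q (2 * Real.sqrt (u * v))

lemma gamma_poch (s : ℝ) (hs : 0 < s) : ∀ n : ℕ,
    Real.Gamma (s + n) = Real.Gamma s * (ascPochhammer ℝ n).eval s := by
  intro n
  induction n with
  | zero => simp
  | succ n ih =>
    have h1 : (s + ((n+1:ℕ)) : ℝ) = (s + n) + 1 := by push_cast; ring
    rw [h1, Real.Gamma_add_one (by positivity), ih, ascPochhammer_succ_eval]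
    ring

lemma poch_le (p ν M : ℝ) (hp : 0 < p) (hν : 0 < ν) (hM1 : 1 ≤ M) (hMν : p ≤ M * ν) :
    ∀ n : ℕ, (ascPochhammer ℝ n).eval p ≤ M ^ n * (ascPochhammer ℝ n).eval ν := by
  intro n
  induction n with
  | zero => simp
  | succ n ih =>
    rw [ascPochhammer_succ_eval, ascPochhammer_succ_eval]
    have h1 : (0:ℝ) < (ascPochhammer ℝ n).eval ν := ascPochhammer_pos n ν hν
    have h2 : (0:ℝ) ≤ p + n := by positivity
    have h3 : p + n ≤ M * (ν + n) := by nlinarith [show (0:ℝ) ≤ (n:ℝ) from Nat.cast_nonneg n]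
    calc (ascPochhammer ℝ n).eval p * (p + n)
        ≤ (M ^ n * (ascPochhammer ℝ n).eval ν) * (p + n) :=
          mul_le_mul_of_nonneg_right ih h2
      _ ≤ (M ^ n * (ascPochhammer ℝ n).eval ν) * (M * (ν + n)) :=
          mul_le_mul_of_nonneg_left h3 (by positivity)
      _ = M ^ (n+1) * ((ascPochhammer ℝ n).eval ν * (ν + n)) := by ring

lemma integ_rpow_exp {a c : ℝ} (ha : 0 < a) (hc : 0 < c) :
    IntegrableOn (fun y : ℝ => y ^ (a - 1) * Real.exp (-(c * y))) (Ioi 0) := by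
  have := integrableOn_rpow_mul_exp_neg_mul_rpow (p := 1) (s := a - 1) (b := c)
    (by linarith) one_pos hc
  simpa [Real.rpow_one, neg_mul] using this

lemma term_eq (c u q η y G : ℝ) (n : ℕ) (hc : 0 < c) (hu : 0 < u) (hy : 0 < y) (hG : 0 < G) :
    y ^ (-η) * (c * Real.exp (-(u + c*y)) * ((c*y)/u) ^ (q/2) *
      ((2*Real.sqrt (u*(c*y))/2) ^ (2*n) * (2*Real.sqrt (u*(c*y))/2) ^ q / G)) =
    (c * Real.exp (-u) * u^n / G) *
      (c ^ ((n:ℝ) + q) * (y ^ ((n:ℝ) + q - η) * Real.exp (-(c*y)))) := by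
  have hv : 0 < c * y := by positivity
  have huv : 0 < u * (c * y) := by positivity
  have hL : 0 < y ^ (-η) * (c * Real.exp (-(u + c*y)) * ((c*y)/u) ^ (q/2) *
      ((2*Real.sqrt (u*(c*y))/2) ^ (2*n) * (2*Real.sqrt (u*(c*y))/2) ^ q / G)) := by positivity
  have hR : 0 < (c * Real.exp (-u) * u^n / G) *
      (c ^ ((n:ℝ) + q) * (y ^ ((n:ℝ) + q - η) * Real.exp (-(c*y)))) := by positivity
  refine Real.log_injOn_pos (mem_Ioi.2 hL) (mem_Ioi.2 hR) ?_
  have hwq : (2*Real.sqrt (u*(c*y))/2) = Real.sqrt (u*(c*y)) := by ring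
  rw [hwq]
  simp (disch := positivity) only [Real.log_mul, Real.log_div, Real.log_rpow,
    Real.log_pow, Real.log_exp, Real.log_sqrt]
  push_cast
  ring

lemma key_expand (c u ν η : ℝ) (hc : 0 < c) (hu : 0 < u) (hν : 0 < ν) (y : ℝ) (hy : 0 < y) :
    y ^ (-η) * (c * Real.exp (-(u + c*y)) * (c*y/u) ^ ((ν-1)/2) *
      besselI (ν-1) (2*Real.sqrt (u*(c*y)))) =
    ∑' n : ℕ, (c * Real.exp (-u) * u^n / (n.factorial * Real.Gamma (n + (ν-1) + 1))) *
      (c ^ ((n:ℝ) + (ν-1)) * (y ^ ((n:ℝ) + (ν-1) - η) * Real.exp (-(c*y)))) := by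
  have h0 : y ^ (-η) * (c * Real.exp (-(u + c*y)) * (c*y/u) ^ ((ν-1)/2) *
      besselI (ν-1) (2*Real.sqrt (u*(c*y)))) =
      ∑' n : ℕ, y ^ (-η) * ((c * Real.exp (-(u + c*y)) * (c*y/u) ^ ((ν-1)/2)) *
        ((2*Real.sqrt (u*(c*y))/2) ^ (2*n) * (2*Real.sqrt (u*(c*y))/2) ^ ((ν-1)) /
          (n.factorial * Real.Gamma (n + (ν-1) + 1)))) := by
    rw [besselI, ← tsum_mul_left, ← tsum_mul_left]
  rw [h0]
  refine tsum_congr fun n => ?_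
  have hG : 0 < (n.factorial : ℝ) * Real.Gamma (n + (ν-1) + 1) := by
    have : (0:ℝ) < (n:ℝ) + (ν-1) + 1 := by
      have : (0:ℝ) ≤ (n:ℝ) := Nat.cast_nonneg n
      linarith
    have := Real.Gamma_pos_of_pos this
    positivity
  exact term_eq c u (ν-1) η y _ n hc hu hy hG

set_option maxHeartbeats 1000000 in
/-- Negative-moment formula for the CIR process: for 2κθ/σ² > η,
    E[X_t^{-η}] is given explicitly in terms of Γ and ₁F₁. -/
theorem cir_negative_moment
    (κ θ σ x t η : ℝ) (hκ : 0 < κ) (hθ : 0 < θ) (hσ : 0 < σ) (hx : 0 < x) (ht : 0 < t)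
    (hη : η < 2 * κ * θ / σ ^ 2) :
    ∫ y in Ioi (0 : ℝ), y ^ (-η) * cirDensity κ θ σ x t y
      = (κ / σ ^ 2) ^ η * (Real.sinh (κ * t / 2)) ^ (-(2 * κ * θ / σ ^ 2)) *
        Real.exp ((κ / σ ^ 2) *
          (κ * θ * t + x - x * (Real.cosh (κ * t / 2) / Real.sinh (κ * t / 2)))) *
        (1 + Real.cosh (κ * t / 2) / Real.sinh (κ * t / 2)) ^ (η - 2 * κ * θ / σ ^ 2) *
        (Real.Gamma (2 * κ * θ / σ ^ 2 - η) / Real.Gamma (2 * κ * θ / σ ^ 2)) *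
        oneF1 (2 * κ * θ / σ ^ 2 - η) (2 * κ * θ / σ ^ 2)
          (2 * κ * x / (σ ^ 2 * (Real.exp (κ * t) - 1))) := by
  have hσ2 : (0:ℝ) < σ ^ 2 := by positivity
  obtain ⟨ν, hν_def⟩ : ∃ ν' : ℝ, ν' = 2 * κ * θ / σ ^ 2 := ⟨_, rfl⟩
  rw [← hν_def] at hη ⊢
  have hν : 0 < ν := by rw [hν_def]; positivity
  have hp : 0 < ν - η := by linarith
  have he1 : Real.exp (-κ * t) < 1 := Real.exp_lt_one_iff.2 (by nlinarith)
  have he0 : 0 < Real.exp (-κ * t) := Real.exp_pos _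
  have hden : 0 < 1 - Real.exp (-κ * t) := by linarith
  obtain ⟨c, hc_def⟩ : ∃ c' : ℝ, c' = 2 * κ / (σ ^ 2 * (1 - Real.exp (-κ * t))) := ⟨_, rfl⟩
  have hc : 0 < c := by rw [hc_def]; positivity
  obtain ⟨u, hu_def⟩ : ∃ u' : ℝ, u' = c * x * Real.exp (-κ * t) := ⟨_, rfl⟩
  have hu : 0 < u := by rw [hu_def]; positivity
  -- the series of functions
  obtain ⟨F, hF_def⟩ : ∃ F' : ℕ → ℝ → ℝ, F' = fun (n : ℕ) (y : ℝ) =>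
      (c * Real.exp (-u) * u^n / (n.factorial * Real.Gamma (n + (ν-1) + 1))) *
        (c ^ ((n:ℝ) + (ν-1)) * (y ^ ((n:ℝ) + (ν-1) - η) * Real.exp (-(c*y)))) := ⟨_, rfl⟩
  have hΓν : ∀ n : ℕ, Real.Gamma ((n:ℝ) + (ν-1) + 1)
      = Real.Gamma ν * (ascPochhammer ℝ n).eval ν := by
    intro n
    rw [show ((n:ℝ) + (ν-1) + 1) = ν + n by ring, gamma_poch ν hν n]
  have hΓνpos : ∀ n : ℕ, 0 < Real.Gamma ((n:ℝ) + (ν-1) + 1) := by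
    intro n
    apply Real.Gamma_pos_of_pos
    have : (0:ℝ) ≤ (n:ℝ) := Nat.cast_nonneg n
    linarith
  -- pointwise expansion
  have hdens : ∀ y : ℝ, cirDensity κ θ σ x t y =
      c * Real.exp (-(u + c*y)) * (c*y/u) ^ ((ν-1)/2) *
        besselI (ν-1) (2*Real.sqrt (u*(c*y))) := by
    intro y
    simp only [cirDensity]
    rw [← hc_def, ← hu_def, ← hν_def]
  have hpt : ∀ y ∈ Ioi (0:ℝ), y ^ (-η) * cirDensity κ θ σ x t y = ∑' n, F n y := by
    intro y hy
    rw [hdens y, hF_def]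
    exact key_expand c u ν η hc hu hν y (mem_Ioi.1 hy)
  -- integrability of each term
  have hInt : ∀ n : ℕ, Integrable (F n) (volume.restrict (Ioi 0)) := by
    intro n
    have ha : 0 < (n:ℝ) + (ν-1) - η + 1 := by
      have : (0:ℝ) ≤ (n:ℝ) := Nat.cast_nonneg n
      linarith
    have hbase := (integ_rpow_exp ha hc).const_mul
      ((c * Real.exp (-u) * u^n / (n.factorial * Real.Gamma (n + (ν-1) + 1)))
        * c ^ ((n:ℝ) + (ν-1)))
    refine hbase.congr ?_
    filter_upwards with y
    simp only [hF_def]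
    rw [show ((n:ℝ) + (ν-1) - η + 1 - 1) = (n:ℝ) + (ν-1) - η by ring]
    ring
  -- value of each integral
  have hint : ∀ n : ℕ, (∫ y in Ioi (0:ℝ), F n y) =
      (Real.exp (-u) * c ^ η * (Real.Gamma (ν - η) / Real.Gamma ν)) *
        (((ascPochhammer ℝ n).eval (ν - η) / (ascPochhammer ℝ n).eval ν)
          * u^n / n.factorial) := by
    intro n
    have ha : 0 < (n:ℝ) + (ν-1) - η + 1 := by
      have : (0:ℝ) ≤ (n:ℝ) := Nat.cast_nonneg n
      linarith
    simp only [hF_def]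
    rw [integral_const_mul, integral_const_mul,
      show ((n:ℝ) + (ν-1) - η) = ((n:ℝ) + (ν-1) - η + 1) - 1 by ring,
      Real.integral_rpow_mul_exp_neg_mul_Ioi ha hc]
    rw [show ((n:ℝ) + (ν-1) - η + 1) = (ν - η) + n by ring, gamma_poch (ν - η) hp n, hΓν n]
    have hE2 : (0:ℝ) < (ascPochhammer ℝ n).eval ν := ascPochhammer_pos n ν hν
    have hΓ : (0:ℝ) < Real.Gamma ν := Real.Gamma_pos_of_pos hν
    have hfac : (0:ℝ) < (n.factorial : ℝ) := by positivity
    have hcpow : c * c ^ ((n:ℝ) + (ν-1)) * (1/c) ^ ((ν - η) + (n:ℝ)) = c ^ η := by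
      rw [one_div, Real.inv_rpow hc.le, ← Real.rpow_neg hc.le]
      nth_rw 1 [← Real.rpow_one c]
      rw [← Real.rpow_add hc, ← Real.rpow_add hc]
      congr 1
      ring
    calc c * Real.exp (-u) * u ^ n /
          (↑n.factorial * (Real.Gamma ν * (ascPochhammer ℝ n).eval ν)) *
          (c ^ ((n:ℝ) + (ν - 1)) *
            ((1/c) ^ ((ν - η) + (n:ℝ)) *
              (Real.Gamma (ν - η) * (ascPochhammer ℝ n).eval (ν - η))))
        = (c * c ^ ((n:ℝ) + (ν-1)) * (1/c) ^ ((ν - η) + (n:ℝ))) *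
            (Real.exp (-u) * u ^ n *
              (Real.Gamma (ν - η) * (ascPochhammer ℝ n).eval (ν - η)) /
              (↑n.factorial * (Real.Gamma ν * (ascPochhammer ℝ n).eval ν))) := by ring
      _ = _ := by rw [hcpow]; field_simp
  -- nonnegativity of the terms
  have hFnn : ∀ (n : ℕ), ∀ y ∈ Ioi (0:ℝ), 0 ≤ F n y := by
    intro n y hy
    have hy' : (0:ℝ) < y := hy
    have h1 := (hΓνpos n).le
    simp only [hF_def]
    have hnum : (0:ℝ) ≤ c * Real.exp (-u) * u ^ n := by positivity
    have hfac : (0:ℝ) ≤ (n.factorial : ℝ) := by positivity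
    exact mul_nonneg (div_nonneg hnum (mul_nonneg hfac h1)) (by positivity)
  have hnorm : ∀ n : ℕ, (∫ y in Ioi (0:ℝ), ‖F n y‖) = ∫ y in Ioi (0:ℝ), F n y := fun n =>
    setIntegral_congr_fun measurableSet_Ioi fun y hy => Real.norm_of_nonneg (hFnn n y hy)
  -- summability of the integrals
  have hΓp : 0 < Real.Gamma (ν - η) := Real.Gamma_pos_of_pos hp
  have hΓ : 0 < Real.Gamma ν := Real.Gamma_pos_of_pos hν
  have hSum : Summable fun n : ℕ => ∫ y in Ioi (0:ℝ), ‖F n y‖ := by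
    have hrw : (fun n : ℕ => ∫ y in Ioi (0:ℝ), ‖F n y‖) = fun n : ℕ =>
        (Real.exp (-u) * c ^ η * (Real.Gamma (ν - η) / Real.Gamma ν)) *
          (((ascPochhammer ℝ n).eval (ν - η) / (ascPochhammer ℝ n).eval ν)
            * u^n / n.factorial) := funext fun n => (hnorm n).trans (hint n)
    rw [hrw]
    obtain ⟨M, hM⟩ : ∃ M' : ℝ, M' = max 1 ((ν - η)/ν) := ⟨_, rfl⟩
    have hM1 : 1 ≤ M := hM ▸ le_max_left _ _
    have hMν : ν - η ≤ M * ν := by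
      have h : (ν - η)/ν ≤ M := hM ▸ le_max_right _ _
      calc ν - η = ((ν - η)/ν) * ν := by field_simp
        _ ≤ M * ν := mul_le_mul_of_nonneg_right h hν.le
    have hC0 : 0 ≤ Real.exp (-u) * c ^ η * (Real.Gamma (ν - η) / Real.Gamma ν) := by positivity
    refine Summable.of_nonneg_of_le (fun n => ?_) (fun n => ?_)
      ((Real.summable_pow_div_factorial (M*u)).mul_left
        (Real.exp (-u) * c ^ η * (Real.Gamma (ν - η) / Real.Gamma ν)))
    · have hE1 : (0:ℝ) ≤ (ascPochhammer ℝ n).eval (ν - η) := (ascPochhammer_pos n _ hp).le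
      have hE2 : (0:ℝ) < (ascPochhammer ℝ n).eval ν := ascPochhammer_pos n ν hν
      have hfac : (0:ℝ) < (n.factorial : ℝ) := by positivity
      exact mul_nonneg hC0
        (div_nonneg (mul_nonneg (div_nonneg hE1 hE2.le) (by positivity)) hfac.le)
    · have hE2 : (0:ℝ) < (ascPochhammer ℝ n).eval ν := ascPochhammer_pos n ν hν
      have hb : (ascPochhammer ℝ n).eval (ν - η) / (ascPochhammer ℝ n).eval ν ≤ M^n :=
        (div_le_iff₀ hE2).2 (poch_le (ν - η) ν M hp hν hM1 hMν n)
      have hfac : (0:ℝ) < (n.factorial : ℝ) := by positivity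
      rw [mul_pow]
      gcongr
  -- hyperbolic facts
  have hs : 0 < Real.sinh (κ * t / 2) := Real.sinh_pos_iff.2 (by positivity)
  have hch : 0 < Real.cosh (κ * t / 2) := Real.cosh_pos _
  have hcoth : 0 < 1 + Real.cosh (κ * t / 2) / Real.sinh (κ * t / 2) := by positivity
  have hA1 : 1 < Real.exp (κ * t / 2) := by
    rw [← Real.exp_zero]; exact Real.exp_lt_exp.2 (by positivity)
  have hA0 : 0 < Real.exp (κ * t / 2) := Real.exp_pos _
  have hAinv : Real.exp (-(κ * t / 2)) = (Real.exp (κ * t / 2))⁻¹ := Real.exp_neg _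
  have hexpkt : Real.exp (-κ * t) = ((Real.exp (κ * t / 2)) * (Real.exp (κ * t / 2)))⁻¹ := by
    rw [← Real.exp_add, ← Real.exp_neg]; ring_nf
  have hexpkt' : Real.exp (κ * t) = (Real.exp (κ * t / 2)) * (Real.exp (κ * t / 2)) := by
    rw [← Real.exp_add]; ring_nf
  have hAA1 : (1:ℝ) < Real.exp (κ * t / 2) * Real.exp (κ * t / 2) := by nlinarith
  have hAA0 : Real.exp (κ * t / 2) * Real.exp (κ * t / 2) - 1 ≠ 0 := by nlinarith
  have h1 : 1 - (Real.exp (κ * t / 2) * Real.exp (κ * t / 2))⁻¹ ≠ 0 := by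
    have h := hden
    rw [hexpkt] at h
    exact h.ne'
  have hAsub : Real.exp (κ * t / 2) - (Real.exp (κ * t / 2))⁻¹ ≠ 0 := by
    have h2 : (Real.exp (κ * t / 2))⁻¹ < 1 := by
      rw [inv_lt_one_iff₀]; right; exact hA1
    nlinarith
  have hsinh_eq : Real.sinh (κ * t / 2)
      = (Real.exp (κ * t / 2) - (Real.exp (κ * t / 2))⁻¹) / 2 := by
    rw [Real.sinh_eq, hAinv]
  have hcosh_eq : Real.cosh (κ * t / 2)
      = (Real.exp (κ * t / 2) + (Real.exp (κ * t / 2))⁻¹) / 2 := by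
    rw [Real.cosh_eq, hAinv]
  have huarg : 2 * κ * x / (σ ^ 2 * (Real.exp (κ * t) - 1)) = u := by
    rw [hu_def, hc_def, hexpkt, hexpkt']
    field_simp [hσ.ne', hAA0, h1]
  have hceq : c = (κ / σ ^ 2) * (1 + Real.cosh (κ * t / 2) / Real.sinh (κ * t / 2)) := by
    rw [hc_def, hcosh_eq, hsinh_eq, hexpkt]
    field_simp [hσ.ne', hAA0, h1, hAsub]
    have hE : Real.exp (κ * t / 2) ^ 2 - 1 ≠ 0 := by nlinarith
    field_simp
    ring
  have hshc : Real.sinh (κ * t / 2) * (1 + Real.cosh (κ * t / 2) / Real.sinh (κ * t / 2))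
      = Real.exp (κ * t / 2) := by
    rw [mul_add, mul_one, mul_div_cancel₀ _ hs.ne']
    exact Real.sinh_add_cosh _
  have hexpu : Real.exp (-u) = Real.exp (κ * t / 2 * (-ν)) *
      Real.exp ((κ / σ ^ 2) *
        (κ * θ * t + x - x * (Real.cosh (κ * t / 2) / Real.sinh (κ * t / 2)))) := by
    rw [← Real.exp_add, Real.exp_eq_exp, hu_def, hc_def, hν_def, hcosh_eq, hsinh_eq, hexpkt]
    field_simp [hσ.ne', hAA0, h1, hAsub]
    have hE : Real.exp (κ * t / 2) ^ 2 - 1 ≠ 0 := by nlinarith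
    field_simp
    ring
  have hpowmerge : Real.sinh (κ * t / 2) ^ (-ν) *
      (1 + Real.cosh (κ * t / 2) / Real.sinh (κ * t / 2)) ^ (-ν)
      = Real.exp (κ * t / 2 * (-ν)) := by
    rw [← Real.mul_rpow hs.le hcoth.le, hshc, ← Real.exp_mul]
  have hscal : Real.exp (-u) * c ^ η * (Real.Gamma (ν - η) / Real.Gamma ν) =
      (κ / σ ^ 2) ^ η * Real.sinh (κ * t / 2) ^ (-ν) *
        Real.exp ((κ / σ ^ 2) *
          (κ * θ * t + x - x * (Real.cosh (κ * t / 2) / Real.sinh (κ * t / 2)))) *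
        (1 + Real.cosh (κ * t / 2) / Real.sinh (κ * t / 2)) ^ (η - ν) *
        (Real.Gamma (ν - η) / Real.Gamma ν) := by
    rw [hceq, Real.mul_rpow (by positivity) hcoth.le,
      show η - ν = η + (-ν) by ring, Real.rpow_add hcoth, hexpu, ← hpowmerge]
    ring
  -- put everything together
  calc ∫ y in Ioi (0:ℝ), y ^ (-η) * cirDensity κ θ σ x t y
      = ∫ y in Ioi (0:ℝ), ∑' n, F n y := setIntegral_congr_fun measurableSet_Ioi hpt
    _ = ∑' n, ∫ y in Ioi (0:ℝ), F n y :=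
        (integral_tsum_of_summable_integral_norm hInt hSum).symm
    _ = Real.exp (-u) * c ^ η * (Real.Gamma (ν - η) / Real.Gamma ν) * oneF1 (ν - η) ν u := by
        rw [oneF1, ← tsum_mul_left]
        exact tsum_congr hint
    _ = _ := by rw [huarg, hscal]
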